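/- If c = x + y·i with x, y ∈ ℝ belongs to the Mandelbric M³, then c' = −x + y·i also belongs to M³. -/

import Mathlib

theorem mandelbric_reflect_mem (x y : ℝ)
    (hc : ∃ M : ℝ, ∀ m : ℕ, 1 ≤ m →
      ‖(fun z : ℂ => z ^ 3 + ((x : ℂ) + (y : ℂ) * Complex.I))^[m] 0‖ ≤ M) :
    ∃ M : ℝ, ∀ m : ℕ, 1 ≤ m →
      ‖(fun z : ℂ => z ^ 3 + ((-x : ℂ) + (y : ℂ) * Complex.I))^[m] 0‖ ≤ M := by
  obtain ⟨M, hM⟩ := hc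
  refine ⟨M, fun m hm => ?_⟩
  have key : ∀ m : ℕ, (fun z : ℂ => z ^ 3 + ((-x : ℂ) + (y : ℂ) * Complex.I))^[m] 0
      = -(starRingEnd ℂ) ((fun z : ℂ => z ^ 3 + ((x : ℂ) + (y : ℂ) * Complex.I))^[m] 0) := by
    intro m
    induction m with
    | zero => simp
    | succ n ih =>
      rw [Function.iterate_succ_apply', Function.iterate_succ_apply', ih]
      simp only [map_add, map_pow, map_mul, Complex.conj_I, Complex.conj_ofReal]
      ring
  rw [key m, norm_neg, Complex.norm_conj]
  exact hM m hm
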